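/- Let n ≥ 1, let π be a uniformly random permutation of {1,…,n}, let c ∈ (0, 1/2) and let t ∈ {1,…,n} with t ≤ c·n. Then for every real g ≥ 1, the probability that there exists j ∈ ℕ with g ≤ 2^j ≤ n and |{1,…,2^j} ∩ {π(1),…,π(t)}| > 2^{j−1} is at most c·(1/2 − c)^{−2} · 2/g. -/

import Mathlib

open scoped Classical

section AuxNoDyadic

open Finset Equiv

lemma fiber1_const (n : ℕ) (s a b : Fin n) :
    (Finset.univ.filter fun π : Equiv.Perm (Fin n) => π s = a).card =
    (Finset.univ.filter fun π : Equiv.Perm (Fin n) => π s = b).card := by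
  apply Finset.card_bij' (fun π _ => Equiv.swap a b * π) (fun π _ => Equiv.swap a b * π)
  · intro π hπ
    simp only [Finset.mem_filter, Finset.mem_univ, true_and] at hπ ⊢
    simp [hπ]
  · intro π hπ
    simp only [Finset.mem_filter, Finset.mem_univ, true_and] at hπ ⊢
    simp [hπ, Equiv.swap_apply_right]
  · intro π _; simp [← mul_assoc]
  · intro π _; simp [← mul_assoc]

lemma fiber1_card (n : ℕ) (s a : Fin n) :
    n * (Finset.univ.filter fun π : Equiv.Perm (Fin n) => π s = a).card = n.factorial := by
  have h := Finset.card_eq_sum_card_fiberwise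
    (f := fun π : Equiv.Perm (Fin n) => π s) (s := Finset.univ) (t := Finset.univ)
    (fun x _ => Finset.mem_univ _)
  rw [Finset.card_univ, Fintype.card_perm, Fintype.card_fin] at h
  have h2 : ∀ b : Fin n, (Finset.univ.filter fun π : Equiv.Perm (Fin n) => π s = b).card
      = (Finset.univ.filter fun π : Equiv.Perm (Fin n) => π s = a).card :=
    fun b => fiber1_const n s b a
  rw [h, Finset.sum_congr rfl (fun b _ => h2 b), Finset.sum_const, Finset.card_univ,
    Fintype.card_fin, smul_eq_mul]

lemma exists_perm_two (n : ℕ) {a a' b b' : Fin n} (h1 : a ≠ a') (h2 : b ≠ b') :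
    ∃ τ : Equiv.Perm (Fin n), τ a = b ∧ τ a' = b' := by
  refine ⟨Equiv.swap (Equiv.swap a b a') b' * Equiv.swap a b, ?_, ?_⟩
  · have hcb : Equiv.swap a b a' ≠ b := by
      intro h
      exact h1.symm ((Equiv.swap a b).injective (h.trans (Equiv.swap_apply_left a b).symm))
    simp only [Equiv.Perm.mul_apply, Equiv.swap_apply_left]
    exact Equiv.swap_apply_of_ne_of_ne hcb.symm h2
  · simp only [Equiv.Perm.mul_apply]
    exact Equiv.swap_apply_left _ _

lemma fiber2_const (n : ℕ) (s s' : Fin n) {a a' b b' : Fin n} (h1 : a ≠ a') (h2 : b ≠ b') :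
    (Finset.univ.filter fun π : Equiv.Perm (Fin n) => π s = a ∧ π s' = a').card =
    (Finset.univ.filter fun π : Equiv.Perm (Fin n) => π s = b ∧ π s' = b').card := by
  obtain ⟨τ, hτ1, hτ2⟩ := exists_perm_two n h1 h2
  apply Finset.card_bij' (fun π _ => τ * π) (fun π _ => τ⁻¹ * π)
  · intro π hπ
    simp only [Finset.mem_filter, Finset.mem_univ, true_and] at hπ ⊢
    simp [hπ.1, hπ.2, hτ1, hτ2]
  · intro π hπ
    simp only [Finset.mem_filter, Finset.mem_univ, true_and] at hπ ⊢
    constructor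
    · simp [Equiv.Perm.mul_apply, hπ.1, ← hτ1]
    · simp [Equiv.Perm.mul_apply, hπ.2, ← hτ2]
  · intro π _; simp [← mul_assoc]
  · intro π _; simp [← mul_assoc]

lemma fiber2_card (n : ℕ) {s s' : Fin n} (hss : s ≠ s') {a a' : Fin n} (haa : a ≠ a') :
    n * (n - 1) * (Finset.univ.filter fun π : Equiv.Perm (Fin n) =>
      π s = a ∧ π s' = a').card = n.factorial := by
  have h := Finset.card_eq_sum_card_fiberwise
    (f := fun π : Equiv.Perm (Fin n) => (π s, π s')) (s := Finset.univ)
    (t := Finset.univ.offDiag)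
    (fun π _ => by
      simp only [Finset.mem_coe, Finset.mem_offDiag, Finset.mem_univ, true_and]
      exact fun h => hss (π.injective h))
  rw [Finset.card_univ, Fintype.card_perm, Fintype.card_fin] at h
  have h2 : ∀ p ∈ Finset.univ.offDiag,
      (Finset.univ.filter fun π : Equiv.Perm (Fin n) => (π s, π s') = p).card
      = (Finset.univ.filter fun π : Equiv.Perm (Fin n) => π s = a ∧ π s' = a').card := by
    intro p hp
    rw [Finset.mem_offDiag] at hp
    have := fiber2_const n s s' (a := p.1) (a' := p.2) (b := a) (b' := a') hp.2.2 haa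
    rw [← this]
    congr 1
    ext π
    simp [Prod.ext_iff]
  rw [h, Finset.sum_congr rfl h2, Finset.sum_const, Finset.offDiag_card, Finset.card_univ,
    Fintype.card_fin, smul_eq_mul, Nat.mul_sub_one, ← Nat.mul_sub_one]

lemma count_single (n : ℕ) (s : Fin n) (A : Finset (Fin n)) :
    n * (Finset.univ.filter fun π : Equiv.Perm (Fin n) => π s ∈ A).card
      = A.card * n.factorial := by
  have h := Finset.card_eq_sum_card_fiberwise
    (f := fun π : Equiv.Perm (Fin n) => π s)
    (s := Finset.univ.filter fun π : Equiv.Perm (Fin n) => π s ∈ A) (t := A)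
    (fun π hπ => (Finset.mem_filter.mp hπ).2)
  have h2 : ∀ a ∈ A,
      ((Finset.univ.filter fun π : Equiv.Perm (Fin n) => π s ∈ A).filter
        (fun π => π s = a)).card
      = (Finset.univ.filter fun π : Equiv.Perm (Fin n) => π s = a).card := by
    intro a ha
    congr 1
    ext π
    simp only [Finset.mem_filter, Finset.mem_univ, true_and, and_iff_right_iff_imp]
    exact fun h => h ▸ ha
  rw [h, Finset.mul_sum, Finset.sum_congr rfl (fun a ha => by rw [h2 a ha, fiber1_card]),
    Finset.sum_const, smul_eq_mul, mul_comm]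

lemma count_pair (n : ℕ) {s s' : Fin n} (hss : s ≠ s') (A : Finset (Fin n)) :
    n * (n - 1) * (Finset.univ.filter fun π : Equiv.Perm (Fin n) =>
        π s ∈ A ∧ π s' ∈ A).card
      = A.card * (A.card - 1) * n.factorial := by
  have h := Finset.card_eq_sum_card_fiberwise
    (f := fun π : Equiv.Perm (Fin n) => (π s, π s'))
    (s := Finset.univ.filter fun π : Equiv.Perm (Fin n) => π s ∈ A ∧ π s' ∈ A)
    (t := A.offDiag)
    (fun π hπ => by
      have := (Finset.mem_filter.mp hπ).2
      simp only [Finset.mem_coe, Finset.mem_offDiag]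
      exact ⟨this.1, this.2, fun h => hss (π.injective h)⟩)
  have h2 : ∀ p ∈ A.offDiag,
      ((Finset.univ.filter fun π : Equiv.Perm (Fin n) => π s ∈ A ∧ π s' ∈ A).filter
        (fun π => (π s, π s') = p)).card
      = (Finset.univ.filter fun π : Equiv.Perm (Fin n) => π s = p.1 ∧ π s' = p.2).card := by
    intro p hp
    rw [Finset.mem_offDiag] at hp
    congr 1
    ext π
    simp only [Finset.mem_filter, Finset.mem_univ, true_and, Prod.ext_iff]
    constructor
    · exact fun h => h.2
    · rintro ⟨h1, h2⟩; exact ⟨⟨h1 ▸ hp.1, h2 ▸ hp.2.1⟩, h1, h2⟩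
  rw [h, Finset.mul_sum,
    Finset.sum_congr rfl (fun p hp => by
      rw [h2 p hp, fiber2_card n hss (Finset.mem_offDiag.mp hp).2.2]),
    Finset.sum_const, smul_eq_mul, Finset.offDiag_card, Nat.mul_sub_one, ← Nat.mul_sub_one]

lemma card_filter_val_lt (n k : ℕ) (h : k ≤ n) :
    (Finset.univ.filter fun i : Fin n => (i : ℕ) < k).card = k := by
  have himg : (Finset.univ.filter fun i : Fin n => (i : ℕ) < k).image Fin.val
      = Finset.range k := by
    ext x
    simp only [Finset.mem_image, Finset.mem_filter, Finset.mem_univ, true_and,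
      Finset.mem_range]
    constructor
    · rintro ⟨i, hi, rfl⟩; exact hi
    · intro hx; exact ⟨⟨x, lt_of_lt_of_le hx h⟩, hx, rfl⟩
  calc (Finset.univ.filter fun i : Fin n => (i : ℕ) < k).card
      = ((Finset.univ.filter fun i : Fin n => (i : ℕ) < k).image Fin.val).card :=
        (Finset.card_image_of_injective _ Fin.val_injective).symm
    _ = (Finset.range k).card := by rw [himg]
    _ = k := Finset.card_range k

lemma inter_image_eq (n : ℕ) (π : Equiv.Perm (Fin n)) (A T : Finset (Fin n)) :
    A ∩ T.image π = (T.filter fun s => π s ∈ A).image π := by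
  ext x
  simp only [Finset.mem_inter, Finset.mem_image, Finset.mem_filter]
  constructor
  · rintro ⟨hxA, s, hs, rfl⟩; exact ⟨s, ⟨hs, hxA⟩, rfl⟩
  · rintro ⟨s, ⟨hs, hsA⟩, rfl⟩; exact ⟨hsA, s, hs, rfl⟩

lemma aux_eq (Nv mv cv : ℝ) (hm : mv ≠ 0) (hcv : 1/2 - cv ≠ 0) :
    Nv * (cv * mv) / ((mv * (1/2 - cv))^2) = Nv * (cv * ((1/2 - cv)^2)⁻¹ / mv) := by
  rw [mul_pow, div_eq_iff (by
    exact mul_ne_zero (pow_ne_zero 2 hm) (pow_ne_zero 2 hcv))]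
  have h1 : (1/2 - cv)^2 * ((1/2 - cv)^2)⁻¹ = 1 := mul_inv_cancel₀ (pow_ne_zero 2 hcv)
  have h2 : mv * mv⁻¹ = 1 := mul_inv_cancel₀ hm
  linear_combination (-(Nv*cv*mv)) * h1 + (-(Nv*cv*((1/2-cv)^2)⁻¹*(1/2-cv)^2*mv)) * h2

lemma aux_ineq (T M nv N : ℝ) (h1 : 1 ≤ T) (h2 : 1 ≤ M) (h3 : T ≤ nv) (h4 : M ≤ nv)
    (hN : 0 ≤ N) :
    (T * T - T) * (M * (M - 1) * N) * nv^2 ≤ N * (T * M)^2 * (nv * (nv - 1)) := by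
  have hT0 : (0:ℝ) ≤ T := le_trans zero_le_one h1
  have hM0 : (0:ℝ) ≤ M := le_trans zero_le_one h2
  have hn0 : (0:ℝ) ≤ nv := le_trans hT0 h3
  nlinarith [mul_nonneg (mul_nonneg (mul_nonneg (mul_nonneg hN hT0) hM0) hn0)
      (mul_nonneg hT0 (sub_nonneg.2 h4)),
    mul_nonneg (mul_nonneg (mul_nonneg (mul_nonneg hN hT0) hM0) hn0)
      (mul_nonneg hn0 (sub_nonneg.2 h2))]

lemma perj (n : ℕ) (hn : 1 ≤ n) (c : ℝ) (hc : c ∈ Set.Ioo (0 : ℝ) (1 / 2))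
    (t : ℕ) (ht1 : 1 ≤ t) (htn : t ≤ n) (htc : (t : ℝ) ≤ c * n)
    (m : ℕ) (hm1 : 1 ≤ m) (hmn : m ≤ n) :
    ((Finset.univ.filter fun π : Equiv.Perm (Fin n) =>
        (((Finset.univ.filter fun i : Fin n => (i : ℕ) < m) ∩
          (Finset.univ.filter fun i : Fin n => (i : ℕ) < t).image π).card : ℝ)
          > (m : ℝ) / 2).card : ℝ)
      ≤ (n.factorial : ℝ) * (c * ((1 / 2 - c) ^ 2)⁻¹ / m) := by
  obtain ⟨hc0, hc2⟩ := hc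
  set A : Finset (Fin n) := Finset.univ.filter fun i : Fin n => (i : ℕ) < m with hA
  set T : Finset (Fin n) := Finset.univ.filter fun i : Fin n => (i : ℕ) < t with hT
  have cardA : A.card = m := card_filter_val_lt n m hmn
  have cardT : T.card = t := card_filter_val_lt n t htn
  set N : ℝ := (n.factorial : ℝ) with hN
  have hNpos : 0 < N := by positivity
  have hnpos : (0:ℝ) < n := by exact_mod_cast hn
  have hmpos : (0:ℝ) < m := by exact_mod_cast hm1
  set μ : ℝ := (t : ℝ) * m / n with hμ
  set Y : Equiv.Perm (Fin n) → ℝ := fun π => ((T.filter fun s => π s ∈ A).card : ℝ) with hY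
  -- rewrite the event
  have hev : ∀ π : Equiv.Perm (Fin n), ((A ∩ T.image π).card : ℝ) = Y π := by
    intro π
    rw [inter_image_eq, Finset.card_image_of_injective _ π.injective]
  -- Y as a sum of indicators
  have hYsum : ∀ π : Equiv.Perm (Fin n), Y π = ∑ s ∈ T, (if π s ∈ A then (1:ℝ) else 0) := by
    intro π
    rw [hY]
    rw [Finset.sum_boole]
  -- first moment
  have hS1 : ∑ π : Equiv.Perm (Fin n), Y π = N * μ := by
    have key : ∀ s : Fin n, ∑ π : Equiv.Perm (Fin n), (if π s ∈ A then (1:ℝ) else 0)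
        = (m : ℝ) * N / n := by
      intro s
      rw [Finset.sum_boole]
      have h0 := count_single n s A
      rw [cardA] at h0
      have h1 : ((n : ℝ)) * ((Finset.univ.filter fun π : Equiv.Perm (Fin n) => π s ∈ A).card : ℝ)
          = (m : ℝ) * N := by rw [hN]; exact_mod_cast congrArg (Nat.cast : ℕ → ℝ) h0
      field_simp
      linarith [h1]
    simp only [hYsum]
    rw [Finset.sum_comm]
    rw [Finset.sum_congr rfl (fun s _ => key s), Finset.sum_const, cardT, nsmul_eq_mul]
    rw [hμ]
    ring
  -- second moment bound
  have hsq : ∀ π : Equiv.Perm (Fin n), (Y π)^2 = Y π +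
      ∑ p ∈ T.offDiag, (if π p.1 ∈ A ∧ π p.2 ∈ A then (1:ℝ) else 0) := by
    intro π
    have h1 : (Y π)^2 = ∑ p ∈ T ×ˢ T, (if π p.1 ∈ A ∧ π p.2 ∈ A then (1:ℝ) else 0) := by
      rw [sq, hYsum, Finset.sum_mul_sum, ← Finset.sum_product']
      apply Finset.sum_congr rfl
      intro p _
      by_cases h1 : π p.1 ∈ A <;> by_cases h2 : π p.2 ∈ A <;> simp [h1, h2]
    rw [h1, ← Finset.diag_union_offDiag T,
      Finset.sum_union (Finset.disjoint_diag_offDiag T), Finset.sum_diag]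
    congr 1
    rw [hYsum]
    apply Finset.sum_congr rfl
    intro s _
    simp
  have hoff : ∑ π : Equiv.Perm (Fin n),
      ∑ p ∈ T.offDiag, (if π p.1 ∈ A ∧ π p.2 ∈ A then (1:ℝ) else 0) ≤ N * μ^2 := by
    rw [Finset.sum_comm]
    rcases Finset.eq_empty_or_nonempty T.offDiag with he | hne
    · rw [he, Finset.sum_empty]
      positivity
    · obtain ⟨p0, hp0⟩ := hne
      have hp0' := Finset.mem_offDiag.mp hp0
      have hn2 : 2 ≤ n := by
        have : 1 < Fintype.card (Fin n) := Fintype.one_lt_card_iff.mpr ⟨p0.1, p0.2, hp0'.2.2⟩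
        rwa [Fintype.card_fin] at this
      have hn1R : (1:ℝ) ≤ (n:ℝ) - 1 := by
        have : (2:ℝ) ≤ n := by exact_mod_cast hn2
        linarith
      have key : ∀ p ∈ T.offDiag, ∑ π : Equiv.Perm (Fin n),
          (if π p.1 ∈ A ∧ π p.2 ∈ A then (1:ℝ) else 0)
          = (m:ℝ) * ((m:ℝ) - 1) * N / ((n:ℝ) * ((n:ℝ) - 1)) := by
        intro p hp
        rw [Finset.sum_boole]
        have hss := (Finset.mem_offDiag.mp hp).2.2
        have h0 := count_pair n hss A
        rw [cardA] at h0
        have hcast : ((n:ℝ)) * ((n:ℝ) - 1) *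
            ((Finset.univ.filter fun π : Equiv.Perm (Fin n) => π p.1 ∈ A ∧ π p.2 ∈ A).card : ℝ)
            = (m:ℝ) * ((m:ℝ) - 1) * N := by
          have := congrArg (Nat.cast : ℕ → ℝ) h0
          push_cast [Nat.cast_sub hn, Nat.cast_sub hm1] at this
          rw [hN]
          linarith [this]
        have hden : (0:ℝ) < (n:ℝ) * ((n:ℝ) - 1) := by
          apply mul_pos hnpos
          linarith
        field_simp
        linarith [hcast]
      rw [Finset.sum_congr rfl key, Finset.sum_const, nsmul_eq_mul, Finset.offDiag_card, cardT]
      have htt : ((t * t - t : ℕ) : ℝ) = (t:ℝ) * t - t := by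
        push_cast [Nat.cast_sub (Nat.le_mul_of_pos_left t ht1)]
        ring
      rw [htt, hμ]
      rw [div_pow, ← mul_div_assoc, ← mul_div_assoc]
      rw [div_le_div_iff₀ (mul_pos hnpos (by linarith)) (by positivity)]
      have htR : (1:ℝ) ≤ (t:ℝ) := by exact_mod_cast ht1
      have hmR : (1:ℝ) ≤ (m:ℝ) := by exact_mod_cast hm1
      have htnR : (t:ℝ) ≤ (n:ℝ) := by exact_mod_cast htn
      have hmnR : (m:ℝ) ≤ (n:ℝ) := by exact_mod_cast hmn
      exact aux_ineq (t:ℝ) (m:ℝ) (n:ℝ) N htR hmR htnR hmnR (le_of_lt hNpos)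
  have hS2 : ∑ π : Equiv.Perm (Fin n), (Y π)^2 ≤ N * μ + N * μ^2 := by
    calc ∑ π : Equiv.Perm (Fin n), (Y π)^2
        = (∑ π : Equiv.Perm (Fin n), Y π) + ∑ π : Equiv.Perm (Fin n),
            ∑ p ∈ T.offDiag, (if π p.1 ∈ A ∧ π p.2 ∈ A then (1:ℝ) else 0) := by
          rw [← Finset.sum_add_distrib]
          exact Finset.sum_congr rfl (fun π _ => hsq π)
      _ ≤ N * μ + N * μ^2 := by
          rw [hS1]
          exact add_le_add (le_refl _) hoff
  -- Chebyshev
  have hμm : μ ≤ c * m := by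
    rw [hμ, div_le_iff₀ hnpos]
    calc (t:ℝ) * m ≤ (c * n) * m :=
        mul_le_mul_of_nonneg_right htc (le_of_lt hmpos)
      _ = c * m * n := by ring
  have hd : (m:ℝ) * (1/2 - c) ≤ (m:ℝ)/2 - μ := by linarith
  have hdpos : (0:ℝ) < (m:ℝ) * (1/2 - c) := by
    apply mul_pos hmpos
    linarith
  have hμ0 : 0 ≤ μ := by positivity
  set E := Finset.univ.filter fun π : Equiv.Perm (Fin n) =>
      (((Finset.univ.filter fun i : Fin n => (i : ℕ) < m) ∩
        (Finset.univ.filter fun i : Fin n => (i : ℕ) < t).image π).card : ℝ)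
        > (m : ℝ) / 2 with hE
  have hvar : ∑ π : Equiv.Perm (Fin n), (Y π - μ)^2 ≤ N * μ := by
    have hexp : ∑ π : Equiv.Perm (Fin n), (Y π - μ)^2
        = (∑ π : Equiv.Perm (Fin n), (Y π)^2)
          - 2 * μ * (∑ π : Equiv.Perm (Fin n), Y π) + N * μ^2 := by
      have hcard : ((Finset.univ : Finset (Equiv.Perm (Fin n))).card : ℝ) = N := by
        rw [Finset.card_univ, Fintype.card_perm, Fintype.card_fin, hN]
      rw [← hcard]
      rw [Finset.sum_congr rfl (fun π _ => by ring :
        ∀ π ∈ (Finset.univ : Finset (Equiv.Perm (Fin n))),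
          (Y π - μ)^2 = (Y π)^2 - 2 * μ * Y π + μ^2)]
      rw [Finset.sum_add_distrib, Finset.sum_sub_distrib, ← Finset.mul_sum,
        Finset.sum_const, nsmul_eq_mul]
    rw [hexp, hS1]
    linarith [hS2]
  have cheb : (E.card : ℝ) * ((m:ℝ) * (1/2 - c))^2 ≤ N * μ := by
    calc (E.card : ℝ) * ((m:ℝ) * (1/2 - c))^2
        ≤ ∑ π ∈ E, (Y π - μ)^2 := by
          rw [← nsmul_eq_mul]
          apply Finset.card_nsmul_le_sum
          intro π hπ
          have hYπ : Y π > (m:ℝ)/2 := by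
            have := (Finset.mem_filter.mp hπ).2
            rwa [hev π] at this
          have h1 : (0:ℝ) ≤ (m:ℝ) * (1/2 - c) := le_of_lt hdpos
          have h2 : (m:ℝ) * (1/2 - c) ≤ Y π - μ := by linarith
          exact pow_le_pow_left₀ h1 h2 2
      _ ≤ ∑ π : Equiv.Perm (Fin n), (Y π - μ)^2 := by
          apply Finset.sum_le_sum_of_subset_of_nonneg (Finset.filter_subset _ _)
          intro π _ _
          positivity
      _ ≤ N * μ := hvar
  have hfinal : (E.card : ℝ) ≤ N * (c * ((1/2 - c)^2)⁻¹ / m) := by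
    have h1 : (E.card : ℝ) ≤ N * (c * m) / ((m:ℝ) * (1/2 - c))^2 := by
      rw [le_div_iff₀ (by positivity)]
      calc (E.card : ℝ) * ((m:ℝ) * (1/2 - c))^2 ≤ N * μ := cheb
        _ ≤ N * (c * m) := mul_le_mul_of_nonneg_left hμm (le_of_lt hNpos)
    have h2 : N * (c * m) / ((m:ℝ) * (1/2 - c))^2 = N * (c * ((1/2 - c)^2)⁻¹ / m) :=
      aux_eq N (m:ℝ) c (ne_of_gt hmpos) (by linarith)
    rw [h2] at h1
    exact h1
  exact hfinal

/-- For a uniformly random permutation `π` of `{1,…,n}` (with `n ≥ 1`), a constant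
`c ∈ (0,1/2)`, a time `t ∈ {1,…,n}` with `t ≤ c·n`, and a real `g ≥ 1`, the probability
that some dyadic prefix `A_j = {1,…,2^j}` with `g ≤ 2^j ≤ n` is more than half-full
at time `t` (i.e. `|A_j ∩ {π(1),…,π(t)}| > 2^(j−1)`) is at most `c·(1/2 − c)⁻²·2/g`. -/
theorem no_dyadic_prefix_half_full (n : ℕ) (hn : 1 ≤ n)
    (c : ℝ) (hc : c ∈ Set.Ioo (0 : ℝ) (1 / 2))
    (t : ℕ) (ht1 : 1 ≤ t) (htn : t ≤ n) (htc : (t : ℝ) ≤ c * n)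
    (g : ℝ) (hg : 1 ≤ g) :
    ((Finset.univ.filter (fun π : Equiv.Perm (Fin n) =>
        ∃ j : ℕ, g ≤ (2 : ℝ) ^ j ∧ (2 : ℝ) ^ j ≤ n ∧
          (((Finset.univ.filter (fun i : Fin n => (i : ℕ) < 2 ^ j)) ∩
              (Finset.univ.filter (fun i : Fin n => (i : ℕ) < t)).image π).card : ℝ)
            > (2 : ℝ) ^ j / 2)).card : ℝ) / (n.factorial : ℝ)
      ≤ c * ((1 / 2 - c) ^ 2)⁻¹ * 2 / g := by
  obtain ⟨hc0, hc2⟩ := hc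
  have hg0 : (0:ℝ) < g := lt_of_lt_of_le zero_lt_one hg
  set N : ℝ := (n.factorial : ℝ) with hN
  have hNpos : 0 < N := by positivity
  set inv : ℝ := ((1 / 2 - c) ^ 2)⁻¹ with hinv
  have hinv0 : 0 ≤ inv := by positivity
  set J : Finset ℕ := (Finset.range (n+1)).filter
    (fun j => g ≤ (2:ℝ)^j ∧ (2:ℝ)^j ≤ n) with hJ
  set Ej : ℕ → Finset (Equiv.Perm (Fin n)) := fun j =>
    Finset.univ.filter (fun π : Equiv.Perm (Fin n) =>
      (((Finset.univ.filter (fun i : Fin n => (i : ℕ) < 2 ^ j)) ∩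
          (Finset.univ.filter (fun i : Fin n => (i : ℕ) < t)).image π).card : ℝ)
        > (2 : ℝ) ^ j / 2) with hEj
  -- subset of union
  have hsub : (Finset.univ.filter (fun π : Equiv.Perm (Fin n) =>
      ∃ j : ℕ, g ≤ (2 : ℝ) ^ j ∧ (2 : ℝ) ^ j ≤ n ∧
        (((Finset.univ.filter (fun i : Fin n => (i : ℕ) < 2 ^ j)) ∩
            (Finset.univ.filter (fun i : Fin n => (i : ℕ) < t)).image π).card : ℝ)
          > (2 : ℝ) ^ j / 2)) ⊆ J.biUnion Ej := by
    intro π hπ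
    obtain ⟨j, hj1, hj2, hj3⟩ := (Finset.mem_filter.mp hπ).2
    have hjn : (2:ℕ)^j ≤ n := by exact_mod_cast hj2
    have hjmem : j ∈ J := by
      rw [hJ, Finset.mem_filter, Finset.mem_range]
      exact ⟨Nat.lt_succ_of_le (le_trans (le_of_lt (Nat.lt_two_pow_self (n := j))) hjn), hj1, hj2⟩
    apply Finset.mem_biUnion.mpr
    exact ⟨j, hjmem, Finset.mem_filter.mpr ⟨Finset.mem_univ _, hj3⟩⟩
  -- per-j bound
  have hper : ∀ j ∈ J, ((Ej j).card : ℝ) ≤ N * (c * inv * ((2:ℝ)^j)⁻¹) := by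
    intro j hj
    rw [hJ, Finset.mem_filter] at hj
    obtain ⟨-, hj1, hj2⟩ := hj
    have hjn : (2:ℕ)^j ≤ n := by exact_mod_cast hj2
    have := perj n hn c ⟨hc0, hc2⟩ t ht1 htn htc (2^j) Nat.one_le_two_pow hjn
    have hcast : (((2:ℕ)^j : ℕ) : ℝ) = (2:ℝ)^j := by push_cast; ring
    rw [hcast] at this
    calc ((Ej j).card : ℝ) ≤ N * (c * inv / (2:ℝ)^j) := by
          rw [hEj]; exact this
      _ = N * (c * inv * ((2:ℝ)^j)⁻¹) := by rw [div_eq_mul_inv]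
  -- geometric sum bound
  have hgeo : ∑ j ∈ J, ((2:ℝ)^j)⁻¹ ≤ 2 / g := by
    rcases Finset.eq_empty_or_nonempty J with he | hne
    · rw [he, Finset.sum_empty]
      positivity
    · set j0 := J.min' hne with hj0
      have hj0mem : j0 ∈ J := J.min'_mem hne
      have hg0' : g ≤ (2:ℝ)^j0 := ((Finset.mem_filter.mp hj0mem).2).1
      have hsub2 : J ⊆ Finset.Ico j0 (n+1) := by
        intro j hj
        rw [Finset.mem_Ico]
        exact ⟨J.min'_le j hj, Finset.mem_range.mp (Finset.mem_filter.mp hj).1⟩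
      calc ∑ j ∈ J, ((2:ℝ)^j)⁻¹
          ≤ ∑ j ∈ Finset.Ico j0 (n+1), ((2:ℝ)^j)⁻¹ := by
            apply Finset.sum_le_sum_of_subset_of_nonneg hsub2
            intro i _ _
            positivity
        _ = ((2:ℝ)^j0)⁻¹ * ∑ i ∈ Finset.range (n+1-j0), ((2:ℝ)^i)⁻¹ := by
            rw [Finset.sum_Ico_eq_sum_range, Finset.mul_sum]
            apply Finset.sum_congr rfl
            intro i _
            rw [pow_add, mul_inv]
        _ ≤ ((2:ℝ)^j0)⁻¹ * 2 := by
            apply mul_le_mul_of_nonneg_left _ (by positivity)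
            have := sum_geometric_two_le (n+1-j0)
            calc ∑ i ∈ Finset.range (n+1-j0), ((2:ℝ)^i)⁻¹
                = ∑ i ∈ Finset.range (n+1-j0), (1/2:ℝ)^i := by
                  apply Finset.sum_congr rfl
                  intro i _
                  rw [one_div, inv_pow]
              _ ≤ 2 := this
        _ ≤ 2 / g := by
            rw [div_eq_mul_inv, mul_comm ((2:ℝ)) g⁻¹]
            apply mul_le_mul_of_nonneg_right _ (by norm_num)
            exact inv_anti₀ hg0 hg0'
  -- assemble
  rw [div_le_iff₀ hNpos]
  calc ((Finset.univ.filter (fun π : Equiv.Perm (Fin n) =>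
        ∃ j : ℕ, g ≤ (2 : ℝ) ^ j ∧ (2 : ℝ) ^ j ≤ n ∧
          (((Finset.univ.filter (fun i : Fin n => (i : ℕ) < 2 ^ j)) ∩
              (Finset.univ.filter (fun i : Fin n => (i : ℕ) < t)).image π).card : ℝ)
            > (2 : ℝ) ^ j / 2)).card : ℝ)
      ≤ ((J.biUnion Ej).card : ℝ) := by
        exact_mod_cast Nat.cast_le.mpr (Finset.card_le_card hsub)
    _ ≤ ∑ j ∈ J, ((Ej j).card : ℝ) := by
        exact_mod_cast Nat.cast_le.mpr (Finset.card_biUnion_le)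
    _ ≤ ∑ j ∈ J, N * (c * inv * ((2:ℝ)^j)⁻¹) := Finset.sum_le_sum hper
    _ = N * (c * inv) * ∑ j ∈ J, ((2:ℝ)^j)⁻¹ := by
        rw [Finset.mul_sum]
        apply Finset.sum_congr rfl
        intro j _
        ring
    _ ≤ N * (c * inv) * (2 / g) := by
        apply mul_le_mul_of_nonneg_left hgeo
        positivity
    _ = c * inv * 2 / g * N := by ring

end AuxNoDyadic
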